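/- (Solution of the machine policy optimization problem, Theorem 4 of the paper.) Let P̂ be a human model, r : 𝓗^T×𝓜^T → ℝ a reward function, and γ > 0. The machine policy Q̂ defined from the Y_γ backward recursion maximizes the entropy-regularized expected reward: for every machine policy Q, H_{P̂Q}(M^T‖H^T) + γ·E_{P̂Q}[r(H^T,M^T)] ≤ H_{P̂Q̂}(M^T‖H^T) + γ·E_{P̂Q̂}[r(H^T,M^T)]. -/

import Mathlib

/-! Common framework: finite-horizon human–machine interaction processes.
Times are 0-indexed: step `t : Fin T` corresponds to the paper's step `t+1`.
A human model gives conditional PMFs `P(h_t | h^{t-1}, m^t)`: the value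
`p t h m a` may depend only on `h s` for `s < t`, on `m s` for `s ≤ t`, and on `a`.
A machine policy gives conditional PMFs `Q(m_t | h^{t-1}, m^{t-1})`: the value
`q t h m b` may depend only on `h s`, `m s` for `s < t`, and on `b`. -/

structure HumanModel (T : ℕ) (H M : Type*) [Fintype H] where
  p : Fin T → (Fin T → H) → (Fin T → M) → H → ℝ
  causal : ∀ (t : Fin T) (h h' : Fin T → H) (m m' : Fin T → M),
      (∀ s, s < t → h s = h' s) → (∀ s, s ≤ t → m s = m' s) → p t h m = p t h' m'
  nonneg : ∀ t h m a, 0 ≤ p t h m a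
  sum_one : ∀ t h m, ∑ a, p t h m a = 1

structure MachinePolicy (T : ℕ) (H M : Type*) [Fintype M] where
  q : Fin T → (Fin T → H) → (Fin T → M) → M → ℝ
  causal : ∀ (t : Fin T) (h h' : Fin T → H) (m m' : Fin T → M),
      (∀ s, s < t → h s = h' s) → (∀ s, s < t → m s = m' s) → q t h m = q t h' m'
  nonneg : ∀ t h m b, 0 ≤ q t h m b
  sum_one : ∀ t h m, ∑ b, q t h m b = 1

variable {T : ℕ} {H M : Type*} [Fintype H] [Fintype M]

/-- Causally conditioned distribution of the human: `P(h^T ‖ m^T)`. -/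
noncomputable def HumanModel.cc (P : HumanModel T H M) (h : Fin T → H) (m : Fin T → M) : ℝ :=
  ∏ t, P.p t h m (h t)

/-- Causally conditioned distribution of the machine: `Q(m^T ‖ h^T)`. -/
noncomputable def MachinePolicy.cc (Q : MachinePolicy T H M) (h : Fin T → H) (m : Fin T → M) : ℝ :=
  ∏ t, Q.q t h m (m t)

/-- Joint PMF `PQ(h^T, m^T)`. -/
noncomputable def jointPMF (P : HumanModel T H M) (Q : MachinePolicy T H M)
    (h : Fin T → H) (m : Fin T → M) : ℝ :=
  P.cc h m * Q.cc h m

/-- Expectation `E_{PQ}[φ(H^T, M^T)]`. -/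
noncomputable def expVal (P : HumanModel T H M) (Q : MachinePolicy T H M)
    (φ : (Fin T → H) → (Fin T → M) → ℝ) : ℝ :=
  ∑ h : Fin T → H, ∑ m : Fin T → M, jointPMF P Q h m * φ h m

/-- Causally conditioned entropy of the human, `H_{PQ}(H^T ‖ M^T)`. -/
noncomputable def humanEntropy (P : HumanModel T H M) (Q : MachinePolicy T H M) : ℝ :=
  ∑ h : Fin T → H, ∑ m : Fin T → M, jointPMF P Q h m * (- Real.log (P.cc h m))

/-- Causally conditioned entropy of the machine, `H_{PQ}(M^T ‖ H^T)`. -/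
noncomputable def machineEntropy (P : HumanModel T H M) (Q : MachinePolicy T H M) : ℝ :=
  ∑ h : Fin T → H, ∑ m : Fin T → M, jointPMF P Q h m * (- Real.log (Q.cc h m))

lemma idx_lt (T k : ℕ) [NeZero T] : T - 1 - k < T := by
  have := Nat.pos_of_ne_zero (NeZero.ne T); omega

variable [NeZero T]

/-- Backward recursion for `Y_γ(m_t | h^{t-1}, m^{t-1})`, parameterized by fuel
`k = (T-1) - t`. `Yaux P r γ k h m` is `Y_γ(m_t | h^{t-1}, m^{t-1})` at (0-indexed)
step `t = T - 1 - k`, where the current machine action `m_t` is read off as `m t`. -/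
noncomputable def Yaux (P : HumanModel T H M)
    (r : (Fin T → H) → (Fin T → M) → ℝ) (γ : ℝ) :
    ℕ → (Fin T → H) → (Fin T → M) → ℝ
  | 0, h, m =>
      Real.exp (γ * ∑ a : H, P.p ⟨T - 1, idx_lt T 0⟩ h m a *
        r (Function.update h ⟨T - 1, idx_lt T 0⟩ a) m)
  | k + 1, h, m =>
      Real.exp (∑ a : H, P.p ⟨T - 1 - (k + 1), idx_lt T (k + 1)⟩ h m a *
        Real.log (∑ b : M, Yaux P r γ k
          (Function.update h ⟨T - 1 - (k + 1), idx_lt T (k + 1)⟩ a)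
          (Function.update m ⟨T - 1 - k, idx_lt T k⟩ b)))

/-- `Y_γ(m_t | h^{t-1}, m^{t-1})` at step `t`, with `m_t = m t`. -/
noncomputable def Ycond (P : HumanModel T H M)
    (r : (Fin T → H) → (Fin T → M) → ℝ) (γ : ℝ) (t : Fin T)
    (h : Fin T → H) (m : Fin T → M) : ℝ :=
  Yaux P r γ (T - 1 - t.val) h m

/-- `Q` is the optimal machine policy `Q̂` obtained from the `Y_γ` backward recursion:
`Q̂(m_t | h^{t-1}, m^{t-1}) = Y_γ(m_t | h^{t-1}, m^{t-1}) / Y_γ(h^{t-1}, m^{t-1})`. -/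
def IsOptMachine (P : HumanModel T H M)
    (r : (Fin T → H) → (Fin T → M) → ℝ) (γ : ℝ) (Q : MachinePolicy T H M) : Prop :=
  ∀ (t : Fin T) (h : Fin T → H) (m : Fin T → M) (b : M),
    Q.q t h m b = Ycond P r γ t h (Function.update m t b) /
      ∑ b' : M, Ycond P r γ t h (Function.update m t b')


section OptProofAux

open Finset

/-! ### Gibbs variational lemmas -/

lemma gibbs_le {α : Type*} [Fintype α] [Nonempty α] (w y : α → ℝ)
    (hw : ∀ b, 0 ≤ w b) (hw1 : ∑ b, w b = 1) (hy : ∀ b, 0 < y b) :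
    ∑ b, w b * (- Real.log (w b) + Real.log (y b)) ≤ Real.log (∑ b, y b) := by
  have hS : 0 < ∑ c, y c := Finset.sum_pos (fun b _ => hy b) Finset.univ_nonempty
  have key : ∀ b : α, w b * (- Real.log (w b) + Real.log (y b))
      ≤ y b / (∑ c, y c) - w b + w b * Real.log (∑ c, y c) := by
    intro b
    rcases eq_or_lt_of_le (hw b) with h0 | h0
    · rw [← h0]
      simp only [zero_mul, sub_zero, add_zero, neg_zero]
      exact le_of_lt (div_pos (hy b) hS)
    · have h1 : 0 < y b / (w b * (∑ c, y c)) := div_pos (hy b) (mul_pos h0 hS)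
      have h2 : Real.log (y b / (w b * (∑ c, y c))) ≤ y b / (w b * (∑ c, y c)) - 1 :=
        Real.log_le_sub_one_of_pos h1
      have h3 : Real.log (y b / (w b * (∑ c, y c)))
          = - Real.log (w b) + Real.log (y b) - Real.log (∑ c, y c) := by
        rw [Real.log_div (ne_of_gt (hy b)) (ne_of_gt (mul_pos h0 hS)),
          Real.log_mul (ne_of_gt h0) (ne_of_gt hS)]
        ring
      have h4 : w b * (y b / (w b * (∑ c, y c)) - 1) = y b / (∑ c, y c) - w b := by
        field_simp
      nlinarith [mul_le_mul_of_nonneg_left h2 (le_of_lt h0)]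
  calc ∑ b, w b * (- Real.log (w b) + Real.log (y b))
      ≤ ∑ b, (y b / (∑ c, y c) - w b + w b * Real.log (∑ c, y c)) :=
        Finset.sum_le_sum (fun b _ => key b)
    _ = Real.log (∑ b, y b) := by
        rw [Finset.sum_add_distrib, Finset.sum_sub_distrib, ← Finset.sum_div, ← Finset.sum_mul,
          hw1]
        field_simp
        ring

lemma gibbs_eq {α : Type*} [Fintype α] [Nonempty α] (y : α → ℝ) (hy : ∀ b, 0 < y b) :
    ∑ b, (y b / ∑ c, y c) * (- Real.log (y b / ∑ c, y c) + Real.log (y b))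
      = Real.log (∑ c, y c) := by
  have hS : 0 < ∑ c, y c := Finset.sum_pos (fun b _ => hy b) Finset.univ_nonempty
  have key : ∀ b : α, (y b / ∑ c, y c) * (- Real.log (y b / ∑ c, y c) + Real.log (y b))
      = (y b / ∑ c, y c) * Real.log (∑ c, y c) := by
    intro b
    rw [Real.log_div (ne_of_gt (hy b)) (ne_of_gt hS)]
    ring
  rw [Finset.sum_congr rfl (fun b _ => key b), ← Finset.sum_mul, ← Finset.sum_div]
  field_simp

/-! ### Splicing -/

/-- `spl t x x'` takes coordinates `< t` from `x` and the rest from `x'`. -/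
def spl {X : Type*} {T : ℕ} (t : ℕ) (x x' : Fin T → X) : Fin T → X :=
  fun s => if (s : ℕ) < t then x s else x' s

lemma spl_zero {X : Type*} (x x' : Fin T → X) : spl 0 x x' = x' := by
  funext s; simp [spl]

lemma spl_top {X : Type*} (u : ℕ) (hu : T ≤ u) (x x' : Fin T → X) : spl u x x' = x := by
  funext s; simp [spl, lt_of_lt_of_le s.isLt hu]

lemma spl_apply_lt {X : Type*} (u : ℕ) (x x' : Fin T → X) (s : Fin T) (hs : (s:ℕ) < u) :
    spl u x x' s = x s := by simp [spl, hs]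

lemma spl_apply_ge {X : Type*} (u : ℕ) (x x' : Fin T → X) (s : Fin T) (hs : u ≤ (s:ℕ)) :
    spl u x x' s = x' s := by simp [spl, Nat.not_lt.mpr hs]

lemma spl_update {X : Type*} (u : ℕ) (t : Fin T) (ht : (t:ℕ) < u) (x x' : Fin T → X) (c : X) :
    spl u x (Function.update x' t c) = spl u x x' := by
  funext s
  by_cases hs : (s:ℕ) < u
  · simp [spl, hs]
  · have hne : s ≠ t := by
      intro e; subst e; exact hs ht
    simp [spl, hs, Function.update_of_ne hne]

lemma spl_succ {X : Type*} (u : ℕ) (hu : u < T) (x x' : Fin T → X) :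
    spl u x x' = spl (u+1) (Function.update x ⟨u, hu⟩ (x' ⟨u, hu⟩)) x' := by
  funext s
  rcases lt_trichotomy (s:ℕ) u with h | h | h
  · have hne : s ≠ ⟨u, hu⟩ := by
      intro e; rw [e] at h; exact lt_irrefl u h
    simp [spl, h, Nat.lt_succ_of_lt h, Function.update_of_ne hne]
  · have he : s = ⟨u, hu⟩ := Fin.ext h
    subst he
    simp [spl, h]
  · have h1 : ¬ (s:ℕ) < u := Nat.not_lt.mpr (le_of_lt h)
    have h2 : ¬ (s:ℕ) < u + 1 := Nat.not_lt.mpr h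
    simp [spl, h1, h2]

/-! ### Splitting a sum over functions at a coordinate -/

lemma card_mul_sum_split {X : Type*} [Fintype X] {T : ℕ} [DecidableEq (Fin T)] (t : Fin T)
    (F : X → (Fin T → X) → ℝ)
    (hF : ∀ a c x, F a (Function.update x t c) = F a x) :
    (Fintype.card X : ℝ) * ∑ x : Fin T → X, F (x t) x
      = ∑ a : X, ∑ x : Fin T → X, F a x := by
  classical
  have hinv : Function.Involutive
      (fun p : X × (Fin T → X) => (p.2 t, Function.update p.2 t p.1)) := by
    intro p
    simp
  have hcomp := Equiv.sum_comp hinv.toPerm (fun p : X × (Fin T → X) => F p.1 p.2)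
  have h1 : ∑ p : X × (Fin T → X), F (p.2 t) (Function.update p.2 t p.1)
      = ∑ a : X, ∑ x : Fin T → X, F a x := by
    calc ∑ p : X × (Fin T → X), F (p.2 t) (Function.update p.2 t p.1)
        = ∑ p : X × (Fin T → X), F p.1 p.2 := hcomp
      _ = ∑ a : X, ∑ x : Fin T → X, F a x := Fintype.sum_prod_type _
  have h2 : ∑ p : X × (Fin T → X), F (p.2 t) (Function.update p.2 t p.1)
      = ∑ p : X × (Fin T → X), F (p.2 t) p.2 := by
    exact Fintype.sum_congr _ _ (fun p => hF (p.2 t) p.1 p.2)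
  have h3 : ∑ p : X × (Fin T → X), F (p.2 t) p.2
      = (Fintype.card X : ℝ) * ∑ x : Fin T → X, F (x t) x := by
    rw [Fintype.sum_prod_type]
    show ∑ _a : X, ∑ x : Fin T → X, F (x t) x = _
    rw [Finset.sum_const, Finset.card_univ, nsmul_eq_mul]
  rw [← h3, ← h2]
  exact h1

/-! ### Peeling two coordinates -/

set_option maxHeartbeats 1600000

lemma peel_two [Nonempty H] [Nonempty M] (tH : Fin T) (tM : Fin T)
    (E : H → M → (Fin T → H) → (Fin T → M) → ℝ)
    (hEh : ∀ a b c h' m', E a b (Function.update h' tH c) m' = E a b h' m')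
    (hEm : ∀ a b c h' m', E a b h' (Function.update m' tM c) = E a b h' m') :
    ((Fintype.card H : ℝ) * (Fintype.card M : ℝ)) *
      (∑ h' : Fin T → H, ∑ m' : Fin T → M, E (h' tH) (m' tM) h' m')
      = ∑ a : H, ∑ b : M, ∑ h' : Fin T → H, ∑ m' : Fin T → M, E a b h' m' := by
  have step1 : ∀ (a : H) (h' : Fin T → H),
      (Fintype.card M : ℝ) * ∑ m' : Fin T → M, E a (m' tM) h' m'
        = ∑ b : M, ∑ m' : Fin T → M, E a b h' m' :=
    fun a h' => card_mul_sum_split tM (fun b m' => E a b h' m')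
      (fun b c m' => hEm a b c h' m')
  have step2 :
      (Fintype.card H : ℝ) * ∑ h' : Fin T → H, (∑ m' : Fin T → M, E (h' tH) (m' tM) h' m')
        = ∑ a : H, ∑ h' : Fin T → H, ∑ m' : Fin T → M, E a (m' tM) h' m' :=
    card_mul_sum_split tH (fun a h' => ∑ m', E a (m' tM) h' m')
      (fun a c h' => Finset.sum_congr rfl (fun m' _ => hEh a (m' tM) c h' m'))
  calc ((Fintype.card H : ℝ) * (Fintype.card M : ℝ)) *
        (∑ h' : Fin T → H, ∑ m' : Fin T → M, E (h' tH) (m' tM) h' m')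
      = (Fintype.card M : ℝ) *
          ((Fintype.card H : ℝ) * ∑ h' : Fin T → H, ∑ m' : Fin T → M, E (h' tH) (m' tM) h' m') := by
        ring
    _ = (Fintype.card M : ℝ) * ∑ a : H, ∑ h' : Fin T → H, ∑ m' : Fin T → M, E a (m' tM) h' m' := by
        rw [step2]
    _ = ∑ a : H, ∑ h' : Fin T → H,
          ((Fintype.card M : ℝ) * ∑ m' : Fin T → M, E a (m' tM) h' m') := by
        rw [Finset.mul_sum]
        exact Finset.sum_congr rfl (fun a _ => Finset.mul_sum _ _ _)
    _ = ∑ a : H, ∑ h' : Fin T → H, ∑ b : M, ∑ m' : Fin T → M, E a b h' m' := by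
        exact Finset.sum_congr rfl (fun a _ => Finset.sum_congr rfl (fun h' _ => step1 a h'))
    _ = ∑ a : H, ∑ b : M, ∑ h' : Fin T → H, ∑ m' : Fin T → M, E a b h' m' := by
        exact Finset.sum_congr rfl (fun a _ => Finset.sum_comm)

/-! ### Filter splitting -/

lemma filter_ge_eq_insert (t : ℕ) (ht : t < T) :
    Finset.univ.filter (fun s : Fin T => t ≤ (s:ℕ))
      = insert (⟨t, ht⟩ : Fin T)
          (Finset.univ.filter (fun s : Fin T => t + 1 ≤ (s:ℕ))) := by
  ext s
  simp only [Finset.mem_filter, Finset.mem_univ, true_and, Finset.mem_insert, Fin.ext_iff]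
  omega

lemma not_mem_filter_succ (t : ℕ) (ht : t < T) :
    (⟨t, ht⟩ : Fin T) ∉ Finset.univ.filter (fun s : Fin T => t + 1 ≤ (s:ℕ)) := by
  simp

lemma prod_ge_split (t : ℕ) (ht : t < T) (f : Fin T → ℝ) :
    ∏ s ∈ Finset.univ.filter (fun s : Fin T => t ≤ (s:ℕ)), f s
      = f ⟨t, ht⟩ * ∏ s ∈ Finset.univ.filter (fun s : Fin T => t + 1 ≤ (s:ℕ)), f s := by
  rw [filter_ge_eq_insert t ht, Finset.prod_insert (not_mem_filter_succ t ht)]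

lemma sum_ge_split (t : ℕ) (ht : t < T) (f : Fin T → ℝ) :
    ∑ s ∈ Finset.univ.filter (fun s : Fin T => t ≤ (s:ℕ)), f s
      = f ⟨t, ht⟩ + ∑ s ∈ Finset.univ.filter (fun s : Fin T => t + 1 ≤ (s:ℕ)), f s := by
  rw [filter_ge_eq_insert t ht, Finset.sum_insert (not_mem_filter_succ t ht)]

lemma filter_ge_top (u : ℕ) (hu : T ≤ u) :
    Finset.univ.filter (fun s : Fin T => u ≤ (s:ℕ)) = (∅ : Finset (Fin T)) := by
  ext s
  simp only [Finset.mem_filter, Finset.mem_univ, true_and, Finset.notMem_empty, iff_false]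
  have := s.isLt
  omega

lemma filter_ge_zero :
    Finset.univ.filter (fun s : Fin T => 0 ≤ (s:ℕ)) = (Finset.univ : Finset (Fin T)) := by
  ext s; simp

/-! ### Tail integrand pieces -/

/-- Product of future conditional PMFs: the `P` factors from step `t` on and the `Q`
factors from step `t+1` on. -/
noncomputable def core (P : HumanModel T H M) (Q : MachinePolicy T H M)
    (t : ℕ) (h : Fin T → H) (m : Fin T → M) : ℝ :=
  (∏ s ∈ Finset.univ.filter (fun s : Fin T => t ≤ (s:ℕ)), P.p s h m (h s)) *
  (∏ s ∈ Finset.univ.filter (fun s : Fin T => t + 1 ≤ (s:ℕ)), Q.q s h m (m s))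

/-- Tail payload: `γ r` plus the log-losses of the machine from step `t+1` on. -/
noncomputable def gtail (Q : MachinePolicy T H M)
    (r : (Fin T → H) → (Fin T → M) → ℝ) (γ : ℝ)
    (t : ℕ) (h : Fin T → H) (m : Fin T → M) : ℝ :=
  γ * r h m + ∑ s ∈ Finset.univ.filter (fun s : Fin T => t + 1 ≤ (s:ℕ)),
    (- Real.log (Q.q s h m (m s)))

/-! ### The tail value recursion `Waux` -/

noncomputable def Waux (P : HumanModel T H M) (Q : MachinePolicy T H M)
    (r : (Fin T → H) → (Fin T → M) → ℝ) (γ : ℝ) :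
    ℕ → (Fin T → H) → (Fin T → M) → ℝ
  | 0, h, m => ∑ a : H, P.p ⟨T - 1, idx_lt T 0⟩ h m a *
      (γ * r (Function.update h ⟨T - 1, idx_lt T 0⟩ a) m)
  | k + 1, h, m => ∑ a : H, P.p ⟨T - 1 - (k + 1), idx_lt T (k + 1)⟩ h m a *
      ∑ b : M, Q.q ⟨T - 1 - k, idx_lt T k⟩
          (Function.update h ⟨T - 1 - (k + 1), idx_lt T (k + 1)⟩ a) m b *
        (- Real.log (Q.q ⟨T - 1 - k, idx_lt T k⟩
            (Function.update h ⟨T - 1 - (k + 1), idx_lt T (k + 1)⟩ a) m b) +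
          Waux P Q r γ k (Function.update h ⟨T - 1 - (k + 1), idx_lt T (k + 1)⟩ a)
            (Function.update m ⟨T - 1 - k, idx_lt T k⟩ b))

lemma Yaux_pos (P : HumanModel T H M) (r : (Fin T → H) → (Fin T → M) → ℝ) (γ : ℝ)
    (k : ℕ) (h : Fin T → H) (m : Fin T → M) : 0 < Yaux P r γ k h m := by
  cases k with
  | zero => exact Real.exp_pos _
  | succ k => exact Real.exp_pos _

lemma waux_le_log [Nonempty M] (P : HumanModel T H M) (Q : MachinePolicy T H M)
    (r : (Fin T → H) → (Fin T → M) → ℝ) (γ : ℝ) :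
    ∀ (k : ℕ) (h : Fin T → H) (m : Fin T → M),
      Waux P Q r γ k h m ≤ Real.log (Yaux P r γ k h m) := by
  intro k
  induction k with
  | zero =>
    intro h m
    rw [show Yaux P r γ 0 h m = Real.exp (γ * ∑ a : H, P.p ⟨T - 1, idx_lt T 0⟩ h m a *
        r (Function.update h ⟨T - 1, idx_lt T 0⟩ a) m) from rfl, Real.log_exp]
    rw [show Waux P Q r γ 0 h m = ∑ a : H, P.p ⟨T - 1, idx_lt T 0⟩ h m a *
        (γ * r (Function.update h ⟨T - 1, idx_lt T 0⟩ a) m) from rfl]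
    rw [Finset.mul_sum]
    exact le_of_eq (Finset.sum_congr rfl (fun a _ => by ring))
  | succ k ih =>
    intro h m
    rw [show Yaux P r γ (k+1) h m = Real.exp (∑ a : H,
        P.p ⟨T - 1 - (k + 1), idx_lt T (k + 1)⟩ h m a *
        Real.log (∑ b : M, Yaux P r γ k
          (Function.update h ⟨T - 1 - (k + 1), idx_lt T (k + 1)⟩ a)
          (Function.update m ⟨T - 1 - k, idx_lt T k⟩ b))) from rfl, Real.log_exp]
    rw [show Waux P Q r γ (k+1) h m = ∑ a : H, P.p ⟨T - 1 - (k + 1), idx_lt T (k + 1)⟩ h m a *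
      ∑ b : M, Q.q ⟨T - 1 - k, idx_lt T k⟩
          (Function.update h ⟨T - 1 - (k + 1), idx_lt T (k + 1)⟩ a) m b *
        (- Real.log (Q.q ⟨T - 1 - k, idx_lt T k⟩
            (Function.update h ⟨T - 1 - (k + 1), idx_lt T (k + 1)⟩ a) m b) +
          Waux P Q r γ k (Function.update h ⟨T - 1 - (k + 1), idx_lt T (k + 1)⟩ a)
            (Function.update m ⟨T - 1 - k, idx_lt T k⟩ b)) from rfl]
    apply Finset.sum_le_sum
    intro a _
    apply mul_le_mul_of_nonneg_left _ (P.nonneg _ _ _ _)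
    set h2 := Function.update h ⟨T - 1 - (k + 1), idx_lt T (k + 1)⟩ a with hh2
    calc ∑ b : M, Q.q ⟨T - 1 - k, idx_lt T k⟩ h2 m b *
          (- Real.log (Q.q ⟨T - 1 - k, idx_lt T k⟩ h2 m b) +
            Waux P Q r γ k h2 (Function.update m ⟨T - 1 - k, idx_lt T k⟩ b))
        ≤ ∑ b : M, Q.q ⟨T - 1 - k, idx_lt T k⟩ h2 m b *
          (- Real.log (Q.q ⟨T - 1 - k, idx_lt T k⟩ h2 m b) +
            Real.log (Yaux P r γ k h2 (Function.update m ⟨T - 1 - k, idx_lt T k⟩ b))) := by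
          apply Finset.sum_le_sum
          intro b _
          exact mul_le_mul_of_nonneg_left
            (add_le_add (le_refl _) (ih h2 (Function.update m ⟨T - 1 - k, idx_lt T k⟩ b)))
            (Q.nonneg _ _ _ _)
      _ ≤ Real.log (∑ b : M, Yaux P r γ k h2 (Function.update m ⟨T - 1 - k, idx_lt T k⟩ b)) :=
          gibbs_le _ _ (fun b => Q.nonneg _ _ _ _) (Q.sum_one _ _ _)
            (fun b => Yaux_pos P r γ k _ _)

lemma waux_opt [Nonempty M] (P : HumanModel T H M)
    (r : (Fin T → H) → (Fin T → M) → ℝ) (γ : ℝ)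
    (Qh : MachinePolicy T H M) (hQh : IsOptMachine P r γ Qh) :
    ∀ (k : ℕ), k ≤ T - 1 → ∀ (h : Fin T → H) (m : Fin T → M),
      Waux P Qh r γ k h m = Real.log (Yaux P r γ k h m) := by
  intro k
  induction k with
  | zero =>
    intro _ h m
    rw [show Yaux P r γ 0 h m = Real.exp (γ * ∑ a : H, P.p ⟨T - 1, idx_lt T 0⟩ h m a *
        r (Function.update h ⟨T - 1, idx_lt T 0⟩ a) m) from rfl, Real.log_exp]
    rw [show Waux P Qh r γ 0 h m = ∑ a : H, P.p ⟨T - 1, idx_lt T 0⟩ h m a *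
        (γ * r (Function.update h ⟨T - 1, idx_lt T 0⟩ a) m) from rfl]
    rw [Finset.mul_sum]
    exact Finset.sum_congr rfl (fun a _ => by ring)
  | succ k ih =>
    intro hk h m
    have hk' : k ≤ T - 1 := le_of_lt (Nat.lt_of_lt_of_le (Nat.lt_succ_self k) hk)
    rw [show Yaux P r γ (k+1) h m = Real.exp (∑ a : H,
        P.p ⟨T - 1 - (k + 1), idx_lt T (k + 1)⟩ h m a *
        Real.log (∑ b : M, Yaux P r γ k
          (Function.update h ⟨T - 1 - (k + 1), idx_lt T (k + 1)⟩ a)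
          (Function.update m ⟨T - 1 - k, idx_lt T k⟩ b))) from rfl, Real.log_exp]
    rw [show Waux P Qh r γ (k+1) h m = ∑ a : H, P.p ⟨T - 1 - (k + 1), idx_lt T (k + 1)⟩ h m a *
      ∑ b : M, Qh.q ⟨T - 1 - k, idx_lt T k⟩
          (Function.update h ⟨T - 1 - (k + 1), idx_lt T (k + 1)⟩ a) m b *
        (- Real.log (Qh.q ⟨T - 1 - k, idx_lt T k⟩
            (Function.update h ⟨T - 1 - (k + 1), idx_lt T (k + 1)⟩ a) m b) +
          Waux P Qh r γ k (Function.update h ⟨T - 1 - (k + 1), idx_lt T (k + 1)⟩ a)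
            (Function.update m ⟨T - 1 - k, idx_lt T k⟩ b)) from rfl]
    apply Finset.sum_congr rfl
    intro a _
    congr 1
    set h2 := Function.update h ⟨T - 1 - (k + 1), idx_lt T (k + 1)⟩ a with hh2
    set y : M → ℝ := fun b => Yaux P r γ k h2 (Function.update m ⟨T - 1 - k, idx_lt T k⟩ b)
      with hy
    have hQ : ∀ b : M, Qh.q ⟨T - 1 - k, idx_lt T k⟩ h2 m b = y b / ∑ c, y c := by
      intro b
      rw [hQh ⟨T - 1 - k, idx_lt T k⟩ h2 m b]
      have harg : ∀ b : M, Ycond P r γ ⟨T - 1 - k, idx_lt T k⟩ h2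
          (Function.update m ⟨T - 1 - k, idx_lt T k⟩ b) = y b := by
        intro b
        rw [Ycond, show ((⟨T - 1 - k, idx_lt T k⟩ : Fin T) : ℕ) = T - 1 - k from rfl,
          show T - 1 - (T - 1 - k) = k from by omega]
      rw [harg b]
      congr 1
      exact Finset.sum_congr rfl (fun c _ => harg c)
    have hWlog : ∀ b : M, Waux P Qh r γ k h2 (Function.update m ⟨T - 1 - k, idx_lt T k⟩ b)
        = Real.log (y b) := fun b => ih hk' h2 _
    calc ∑ b : M, Qh.q ⟨T - 1 - k, idx_lt T k⟩ h2 m b *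
          (- Real.log (Qh.q ⟨T - 1 - k, idx_lt T k⟩ h2 m b) +
            Waux P Qh r γ k h2 (Function.update m ⟨T - 1 - k, idx_lt T k⟩ b))
        = ∑ b : M, (y b / ∑ c, y c) * (- Real.log (y b / ∑ c, y c) + Real.log (y b)) := by
          exact Finset.sum_congr rfl (fun b _ => by rw [hQ b, hWlog b])
      _ = Real.log (∑ c, y c) := gibbs_eq y (fun b => Yaux_pos P r γ k _ _)


lemma sum_sum_mul_left {ι κ : Type*} [Fintype ι] [Fintype κ] (c : ℝ) (f : ι → κ → ℝ) :
    ∑ i : ι, ∑ j : κ, c * f i j = c * ∑ i : ι, ∑ j : κ, f i j := by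
  simp [Finset.mul_sum]

lemma sum_sum_mul_add {ι κ : Type*} [Fintype ι] [Fintype κ] (L : ℝ) (f g : ι → κ → ℝ) :
    ∑ i : ι, ∑ j : κ, f i j * (L + g i j)
      = L * (∑ i : ι, ∑ j : κ, f i j) + ∑ i : ι, ∑ j : κ, f i j * g i j := by
  calc ∑ i : ι, ∑ j : κ, f i j * (L + g i j)
      = ∑ i : ι, ∑ j : κ, (L * f i j + f i j * g i j) :=
        Finset.sum_congr rfl (fun i _ => Finset.sum_congr rfl (fun j _ => by ring))
    _ = (∑ i : ι, ∑ j : κ, L * f i j) + ∑ i : ι, ∑ j : κ, f i j * g i j := by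
        rw [← Finset.sum_add_distrib]
        exact Finset.sum_congr rfl (fun i _ => Finset.sum_add_distrib)
    _ = _ := by rw [sum_sum_mul_left]

lemma sum_const_fun {X : Type*} [Fintype X] (c : ℝ) :
    ∑ _x : Fin T → X, c = (Fintype.card X : ℝ)^T * c := by
  simp [Finset.sum_const, Finset.card_univ, Fintype.card_fun, nsmul_eq_mul]

lemma sum_eval_coord {X : Type*} [Fintype X] [Nonempty X] (t : Fin T) (f : X → ℝ) :
    ∑ x : Fin T → X, f (x t) = (Fintype.card X : ℝ)^(T-1) * ∑ a, f a := by
  have h := card_mul_sum_split (T := T) t (fun a (_ : Fin T → X) => f a)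
    (fun a c x => rfl)
  have hR : ∑ a : X, ∑ _x : Fin T → X, f a = (Fintype.card X : ℝ)^T * ∑ a, f a := by
    rw [Finset.mul_sum]
    exact Finset.sum_congr rfl (fun a _ => sum_const_fun (f a))
  rw [hR] at h
  have hpow : (Fintype.card X : ℝ)^T = (Fintype.card X : ℝ) * (Fintype.card X : ℝ)^(T-1) := by
    rw [← pow_succ']
    congr 1
    have := Nat.pos_of_ne_zero (NeZero.ne T)
    omega
  have hne : (Fintype.card X : ℝ) ≠ 0 := Nat.cast_ne_zero.mpr Fintype.card_ne_zero
  apply mul_left_cancel₀ hne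
  rw [h, hpow]
  ring

/-! ### One-step peeling of the tail sums -/

lemma mass_step [Nonempty H] [Nonempty M] (P : HumanModel T H M) (Q : MachinePolicy T H M)
    (t0 t1 : ℕ) (het : t0 + 1 = t1) (ht0 : t0 < T) (ht1 : t1 < T)
    (h : Fin T → H) (m : Fin T → M) :
    ((Fintype.card H : ℝ) * (Fintype.card M : ℝ)) *
      ∑ h' : Fin T → H, ∑ m' : Fin T → M,
        core P Q t0 (spl t0 h h') (spl (t0+1) m m')
    = ∑ a : H, P.p ⟨t0, ht0⟩ h m a *
        ∑ b : M, Q.q ⟨t1, ht1⟩ (Function.update h ⟨t0, ht0⟩ a) m b *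
          (∑ h' : Fin T → H, ∑ m' : Fin T → M,
            core P Q t1 (spl t1 (Function.update h ⟨t0, ht0⟩ a) h')
              (spl (t1+1) (Function.update m ⟨t1, ht1⟩ b) m')) := by
  subst het
  have hpoint : ∀ (h' : Fin T → H) (m' : Fin T → M),
      core P Q t0 (spl t0 h h') (spl (t0+1) m m')
        = P.p ⟨t0, ht0⟩ h m (h' ⟨t0, ht0⟩) *
          (Q.q ⟨t0+1, ht1⟩ (Function.update h ⟨t0, ht0⟩ (h' ⟨t0, ht0⟩)) m (m' ⟨t0+1, ht1⟩) *
            core P Q (t0+1) (spl (t0+1) (Function.update h ⟨t0, ht0⟩ (h' ⟨t0, ht0⟩)) h')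
              (spl (t0+1+1) (Function.update m ⟨t0+1, ht1⟩ (m' ⟨t0+1, ht1⟩)) m')) := by
    intro h' m'
    have hA : spl t0 h h' = spl (t0+1) (Function.update h ⟨t0, ht0⟩ (h' ⟨t0, ht0⟩)) h' :=
      spl_succ t0 ht0 h h'
    have hB : spl (t0+1) m m'
        = spl (t0+1+1) (Function.update m ⟨t0+1, ht1⟩ (m' ⟨t0+1, ht1⟩)) m' :=
      spl_succ (t0+1) ht1 m m'
    have hσt : spl t0 h h' ⟨t0, ht0⟩ = h' ⟨t0, ht0⟩ :=
      spl_apply_ge t0 h h' ⟨t0, ht0⟩ le_rfl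
    have hμt : spl (t0+1) m m' ⟨t0+1, ht1⟩ = m' ⟨t0+1, ht1⟩ :=
      spl_apply_ge (t0+1) m m' ⟨t0+1, ht1⟩ le_rfl
    have hP : P.p ⟨t0, ht0⟩ (spl t0 h h') (spl (t0+1) m m') = P.p ⟨t0, ht0⟩ h m := by
      apply P.causal
      · intro s hs
        exact spl_apply_lt t0 h h' s hs
      · intro s hs
        exact spl_apply_lt (t0+1) m m' s (Nat.lt_succ_of_le hs)
    have hQc : Q.q ⟨t0+1, ht1⟩ (spl t0 h h') (spl (t0+1) m m')
        = Q.q ⟨t0+1, ht1⟩ (Function.update h ⟨t0, ht0⟩ (h' ⟨t0, ht0⟩)) m := by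
      apply Q.causal
      · intro s hs
        rw [hA]
        exact spl_apply_lt (t0+1) _ h' s hs
      · intro s hs
        exact spl_apply_lt (t0+1) m m' s hs
    rw [core, prod_ge_split t0 ht0 (fun s => P.p s (spl t0 h h') (spl (t0+1) m m') (spl t0 h h' s)),
      prod_ge_split (t0+1) ht1 (fun s => Q.q s (spl t0 h h') (spl (t0+1) m m') (spl (t0+1) m m' s))]
    rw [hP, hσt, hQc, hμt]
    rw [core]
    rw [← hA, ← hB]
    ring
  have hpeel := peel_two (⟨t0, ht0⟩ : Fin T) (⟨t0+1, ht1⟩ : Fin T)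
    (fun a b h' m' =>
      P.p ⟨t0, ht0⟩ h m a *
        (Q.q ⟨t0+1, ht1⟩ (Function.update h ⟨t0, ht0⟩ a) m b *
          core P Q (t0+1) (spl (t0+1) (Function.update h ⟨t0, ht0⟩ a) h')
            (spl (t0+1+1) (Function.update m ⟨t0+1, ht1⟩ b) m')))
    (fun a b c h' m' => by
      beta_reduce
      rw [spl_update (t0+1) ⟨t0, ht0⟩ (Nat.lt_succ_self t0) (Function.update h ⟨t0, ht0⟩ a) h' c])
    (fun a b c h' m' => by
      beta_reduce
      rw [spl_update (t0+1+1) ⟨t0+1, ht1⟩ (Nat.lt_succ_self (t0+1))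
        (Function.update m ⟨t0+1, ht1⟩ b) m' c])
  calc ((Fintype.card H : ℝ) * (Fintype.card M : ℝ)) *
        ∑ h' : Fin T → H, ∑ m' : Fin T → M, core P Q t0 (spl t0 h h') (spl (t0+1) m m')
      = ((Fintype.card H : ℝ) * (Fintype.card M : ℝ)) *
        ∑ h' : Fin T → H, ∑ m' : Fin T → M,
          P.p ⟨t0, ht0⟩ h m (h' ⟨t0, ht0⟩) *
            (Q.q ⟨t0+1, ht1⟩ (Function.update h ⟨t0, ht0⟩ (h' ⟨t0, ht0⟩)) m (m' ⟨t0+1, ht1⟩) *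
              core P Q (t0+1) (spl (t0+1) (Function.update h ⟨t0, ht0⟩ (h' ⟨t0, ht0⟩)) h')
                (spl (t0+1+1) (Function.update m ⟨t0+1, ht1⟩ (m' ⟨t0+1, ht1⟩)) m')) := by
        congr 1
        exact Finset.sum_congr rfl (fun h' _ => Finset.sum_congr rfl (fun m' _ => hpoint h' m'))
    _ = ∑ a : H, ∑ b : M, ∑ h' : Fin T → H, ∑ m' : Fin T → M,
          P.p ⟨t0, ht0⟩ h m a *
            (Q.q ⟨t0+1, ht1⟩ (Function.update h ⟨t0, ht0⟩ a) m b *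
              core P Q (t0+1) (spl (t0+1) (Function.update h ⟨t0, ht0⟩ a) h')
                (spl (t0+1+1) (Function.update m ⟨t0+1, ht1⟩ b) m')) := hpeel
    _ = ∑ a : H, P.p ⟨t0, ht0⟩ h m a *
          ∑ b : M, Q.q ⟨t0+1, ht1⟩ (Function.update h ⟨t0, ht0⟩ a) m b *
            (∑ h' : Fin T → H, ∑ m' : Fin T → M,
              core P Q (t0+1) (spl (t0+1) (Function.update h ⟨t0, ht0⟩ a) h')
                (spl (t0+1+1) (Function.update m ⟨t0+1, ht1⟩ b) m')) := by
        refine Finset.sum_congr rfl (fun a _ => ?_)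
        rw [Finset.mul_sum]
        refine Finset.sum_congr rfl (fun b _ => ?_)
        rw [sum_sum_mul_left, sum_sum_mul_left]


lemma weighted_step [Nonempty H] [Nonempty M] (P : HumanModel T H M) (Q : MachinePolicy T H M)
    (r : (Fin T → H) → (Fin T → M) → ℝ) (γ : ℝ)
    (t0 t1 : ℕ) (het : t0 + 1 = t1) (ht0 : t0 < T) (ht1 : t1 < T)
    (h : Fin T → H) (m : Fin T → M) :
    ((Fintype.card H : ℝ) * (Fintype.card M : ℝ)) *
      ∑ h' : Fin T → H, ∑ m' : Fin T → M,
        core P Q t0 (spl t0 h h') (spl (t0+1) m m') *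
          gtail Q r γ t0 (spl t0 h h') (spl (t0+1) m m')
    = ∑ a : H, P.p ⟨t0, ht0⟩ h m a *
        ∑ b : M, Q.q ⟨t1, ht1⟩ (Function.update h ⟨t0, ht0⟩ a) m b *
          ((- Real.log (Q.q ⟨t1, ht1⟩ (Function.update h ⟨t0, ht0⟩ a) m b)) *
              (∑ h' : Fin T → H, ∑ m' : Fin T → M,
                core P Q t1 (spl t1 (Function.update h ⟨t0, ht0⟩ a) h')
                  (spl (t1+1) (Function.update m ⟨t1, ht1⟩ b) m'))
            + ∑ h' : Fin T → H, ∑ m' : Fin T → M,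
                core P Q t1 (spl t1 (Function.update h ⟨t0, ht0⟩ a) h')
                  (spl (t1+1) (Function.update m ⟨t1, ht1⟩ b) m') *
                gtail Q r γ t1 (spl t1 (Function.update h ⟨t0, ht0⟩ a) h')
                  (spl (t1+1) (Function.update m ⟨t1, ht1⟩ b) m')) := by
  subst het
  have hpoint : ∀ (h' : Fin T → H) (m' : Fin T → M),
      core P Q t0 (spl t0 h h') (spl (t0+1) m m') *
        gtail Q r γ t0 (spl t0 h h') (spl (t0+1) m m')
        = P.p ⟨t0, ht0⟩ h m (h' ⟨t0, ht0⟩) *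
          (Q.q ⟨t0+1, ht1⟩ (Function.update h ⟨t0, ht0⟩ (h' ⟨t0, ht0⟩)) m (m' ⟨t0+1, ht1⟩) *
            (core P Q (t0+1) (spl (t0+1) (Function.update h ⟨t0, ht0⟩ (h' ⟨t0, ht0⟩)) h')
                (spl (t0+1+1) (Function.update m ⟨t0+1, ht1⟩ (m' ⟨t0+1, ht1⟩)) m') *
              ((- Real.log (Q.q ⟨t0+1, ht1⟩
                  (Function.update h ⟨t0, ht0⟩ (h' ⟨t0, ht0⟩)) m (m' ⟨t0+1, ht1⟩))) +
                gtail Q r γ (t0+1)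
                  (spl (t0+1) (Function.update h ⟨t0, ht0⟩ (h' ⟨t0, ht0⟩)) h')
                  (spl (t0+1+1) (Function.update m ⟨t0+1, ht1⟩ (m' ⟨t0+1, ht1⟩)) m')))) := by
    intro h' m'
    have hA : spl t0 h h' = spl (t0+1) (Function.update h ⟨t0, ht0⟩ (h' ⟨t0, ht0⟩)) h' :=
      spl_succ t0 ht0 h h'
    have hB : spl (t0+1) m m'
        = spl (t0+1+1) (Function.update m ⟨t0+1, ht1⟩ (m' ⟨t0+1, ht1⟩)) m' :=
      spl_succ (t0+1) ht1 m m'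
    have hσt : spl t0 h h' ⟨t0, ht0⟩ = h' ⟨t0, ht0⟩ :=
      spl_apply_ge t0 h h' ⟨t0, ht0⟩ le_rfl
    have hμt : spl (t0+1) m m' ⟨t0+1, ht1⟩ = m' ⟨t0+1, ht1⟩ :=
      spl_apply_ge (t0+1) m m' ⟨t0+1, ht1⟩ le_rfl
    have hP : P.p ⟨t0, ht0⟩ (spl t0 h h') (spl (t0+1) m m') = P.p ⟨t0, ht0⟩ h m := by
      apply P.causal
      · intro s hs
        exact spl_apply_lt t0 h h' s hs
      · intro s hs
        exact spl_apply_lt (t0+1) m m' s (Nat.lt_succ_of_le hs)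
    have hQc : Q.q ⟨t0+1, ht1⟩ (spl t0 h h') (spl (t0+1) m m')
        = Q.q ⟨t0+1, ht1⟩ (Function.update h ⟨t0, ht0⟩ (h' ⟨t0, ht0⟩)) m := by
      apply Q.causal
      · intro s hs
        rw [hA]
        exact spl_apply_lt (t0+1) _ h' s hs
      · intro s hs
        exact spl_apply_lt (t0+1) m m' s hs
    have hcore : core P Q t0 (spl t0 h h') (spl (t0+1) m m')
        = P.p ⟨t0, ht0⟩ h m (h' ⟨t0, ht0⟩) *
          (Q.q ⟨t0+1, ht1⟩ (Function.update h ⟨t0, ht0⟩ (h' ⟨t0, ht0⟩)) m (m' ⟨t0+1, ht1⟩) *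
            core P Q (t0+1) (spl t0 h h') (spl (t0+1) m m')) := by
      rw [core,
        prod_ge_split t0 ht0 (fun s => P.p s (spl t0 h h') (spl (t0+1) m m') (spl t0 h h' s)),
        prod_ge_split (t0+1) ht1
          (fun s => Q.q s (spl t0 h h') (spl (t0+1) m m') (spl (t0+1) m m' s))]
      rw [hP, hσt, hQc, hμt]
      rw [core]
      ring
    have hgt : gtail Q r γ t0 (spl t0 h h') (spl (t0+1) m m')
        = (- Real.log (Q.q ⟨t0+1, ht1⟩
              (Function.update h ⟨t0, ht0⟩ (h' ⟨t0, ht0⟩)) m (m' ⟨t0+1, ht1⟩))) +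
          gtail Q r γ (t0+1) (spl t0 h h') (spl (t0+1) m m') := by
      rw [gtail,
        sum_ge_split (t0+1) ht1
          (fun s => - Real.log (Q.q s (spl t0 h h') (spl (t0+1) m m') (spl (t0+1) m m' s)))]
      rw [hQc, hμt]
      rw [gtail]
      ring
    rw [hcore, hgt]
    rw [hA, hB]
    ring
  have hpeel := peel_two (⟨t0, ht0⟩ : Fin T) (⟨t0+1, ht1⟩ : Fin T)
    (fun a b h' m' =>
      P.p ⟨t0, ht0⟩ h m a *
        (Q.q ⟨t0+1, ht1⟩ (Function.update h ⟨t0, ht0⟩ a) m b *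
          (core P Q (t0+1) (spl (t0+1) (Function.update h ⟨t0, ht0⟩ a) h')
              (spl (t0+1+1) (Function.update m ⟨t0+1, ht1⟩ b) m') *
            ((- Real.log (Q.q ⟨t0+1, ht1⟩ (Function.update h ⟨t0, ht0⟩ a) m b)) +
              gtail Q r γ (t0+1) (spl (t0+1) (Function.update h ⟨t0, ht0⟩ a) h')
                (spl (t0+1+1) (Function.update m ⟨t0+1, ht1⟩ b) m')))))
    (fun a b c h' m' => by
      beta_reduce
      rw [spl_update (t0+1) ⟨t0, ht0⟩ (Nat.lt_succ_self t0) (Function.update h ⟨t0, ht0⟩ a) h' c])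
    (fun a b c h' m' => by
      beta_reduce
      rw [spl_update (t0+1+1) ⟨t0+1, ht1⟩ (Nat.lt_succ_self (t0+1))
        (Function.update m ⟨t0+1, ht1⟩ b) m' c])
  calc ((Fintype.card H : ℝ) * (Fintype.card M : ℝ)) *
        ∑ h' : Fin T → H, ∑ m' : Fin T → M,
          core P Q t0 (spl t0 h h') (spl (t0+1) m m') *
            gtail Q r γ t0 (spl t0 h h') (spl (t0+1) m m')
      = ((Fintype.card H : ℝ) * (Fintype.card M : ℝ)) *
        ∑ h' : Fin T → H, ∑ m' : Fin T → M,
          P.p ⟨t0, ht0⟩ h m (h' ⟨t0, ht0⟩) *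
            (Q.q ⟨t0+1, ht1⟩ (Function.update h ⟨t0, ht0⟩ (h' ⟨t0, ht0⟩)) m (m' ⟨t0+1, ht1⟩) *
              (core P Q (t0+1) (spl (t0+1) (Function.update h ⟨t0, ht0⟩ (h' ⟨t0, ht0⟩)) h')
                  (spl (t0+1+1) (Function.update m ⟨t0+1, ht1⟩ (m' ⟨t0+1, ht1⟩)) m') *
                ((- Real.log (Q.q ⟨t0+1, ht1⟩
                    (Function.update h ⟨t0, ht0⟩ (h' ⟨t0, ht0⟩)) m (m' ⟨t0+1, ht1⟩))) +
                  gtail Q r γ (t0+1)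
                    (spl (t0+1) (Function.update h ⟨t0, ht0⟩ (h' ⟨t0, ht0⟩)) h')
                    (spl (t0+1+1) (Function.update m ⟨t0+1, ht1⟩ (m' ⟨t0+1, ht1⟩)) m')))) := by
        congr 1
        exact Finset.sum_congr rfl (fun h' _ => Finset.sum_congr rfl (fun m' _ => hpoint h' m'))
    _ = ∑ a : H, ∑ b : M, ∑ h' : Fin T → H, ∑ m' : Fin T → M,
          P.p ⟨t0, ht0⟩ h m a *
            (Q.q ⟨t0+1, ht1⟩ (Function.update h ⟨t0, ht0⟩ a) m b *
              (core P Q (t0+1) (spl (t0+1) (Function.update h ⟨t0, ht0⟩ a) h')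
                  (spl (t0+1+1) (Function.update m ⟨t0+1, ht1⟩ b) m') *
                ((- Real.log (Q.q ⟨t0+1, ht1⟩ (Function.update h ⟨t0, ht0⟩ a) m b)) +
                  gtail Q r γ (t0+1) (spl (t0+1) (Function.update h ⟨t0, ht0⟩ a) h')
                    (spl (t0+1+1) (Function.update m ⟨t0+1, ht1⟩ b) m')))) := hpeel
    _ = ∑ a : H, P.p ⟨t0, ht0⟩ h m a *
          ∑ b : M, Q.q ⟨t0+1, ht1⟩ (Function.update h ⟨t0, ht0⟩ a) m b *
            ((- Real.log (Q.q ⟨t0+1, ht1⟩ (Function.update h ⟨t0, ht0⟩ a) m b)) *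
                (∑ h' : Fin T → H, ∑ m' : Fin T → M,
                  core P Q (t0+1) (spl (t0+1) (Function.update h ⟨t0, ht0⟩ a) h')
                    (spl (t0+1+1) (Function.update m ⟨t0+1, ht1⟩ b) m'))
              + ∑ h' : Fin T → H, ∑ m' : Fin T → M,
                  core P Q (t0+1) (spl (t0+1) (Function.update h ⟨t0, ht0⟩ a) h')
                    (spl (t0+1+1) (Function.update m ⟨t0+1, ht1⟩ b) m') *
                  gtail Q r γ (t0+1) (spl (t0+1) (Function.update h ⟨t0, ht0⟩ a) h')
                    (spl (t0+1+1) (Function.update m ⟨t0+1, ht1⟩ b) m')) := by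
        refine Finset.sum_congr rfl (fun a _ => ?_)
        rw [Finset.mul_sum]
        refine Finset.sum_congr rfl (fun b _ => ?_)
        rw [sum_sum_mul_left, sum_sum_mul_left, sum_sum_mul_add]


/-! ### The main tail identity -/

lemma tail_main [Nonempty H] [Nonempty M] (P : HumanModel T H M) (Q : MachinePolicy T H M)
    (r : (Fin T → H) → (Fin T → M) → ℝ) (γ : ℝ) :
    ∀ (k : ℕ), k < T → ∀ (h : Fin T → H) (m : Fin T → M),
      (∑ h' : Fin T → H, ∑ m' : Fin T → M,
          core P Q (T-1-k) (spl (T-1-k) h h') (spl (T-1-k+1) m m')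
        = (Fintype.card H : ℝ)^(T-1-k) * (Fintype.card M : ℝ)^(T-1-k+1))
      ∧ (∑ h' : Fin T → H, ∑ m' : Fin T → M,
          core P Q (T-1-k) (spl (T-1-k) h h') (spl (T-1-k+1) m m') *
            gtail Q r γ (T-1-k) (spl (T-1-k) h h') (spl (T-1-k+1) m m')
        = (Fintype.card H : ℝ)^(T-1-k) * (Fintype.card M : ℝ)^(T-1-k+1) *
            Waux P Q r γ k h m) := by
  intro k
  induction k with
  | zero =>
    intro hk h m
    simp only [Nat.sub_zero]
    have hT1 : T - 1 + 1 = T := by omega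
    have hA : ∀ h' : Fin T → H, spl (T-1) h h' =
        Function.update h ⟨T-1, idx_lt T 0⟩ (h' ⟨T-1, idx_lt T 0⟩) := by
      intro h'
      rw [spl_succ (T-1) (idx_lt T 0) h h', spl_top (T-1+1) (by omega)]
    have hB : ∀ m' : Fin T → M, spl (T-1+1) m m' = m :=
      fun m' => spl_top _ (by omega) m m'
    have hPc : ∀ a : H, P.p ⟨T-1, idx_lt T 0⟩
        (Function.update h ⟨T-1, idx_lt T 0⟩ a) m = P.p ⟨T-1, idx_lt T 0⟩ h m := by
      intro a
      apply P.causal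
      · intro s hs
        refine Function.update_of_ne ?_ _ _
        intro e
        rw [e] at hs
        exact lt_irrefl _ hs
      · intro s _
        rfl
    have hcore : ∀ (h' : Fin T → H) (m' : Fin T → M),
        core P Q (T-1) (spl (T-1) h h') (spl (T-1+1) m m')
          = P.p ⟨T-1, idx_lt T 0⟩ h m (h' ⟨T-1, idx_lt T 0⟩) := by
      intro h' m'
      rw [core, hA h', hB m',
        prod_ge_split (T-1) (idx_lt T 0)
          (fun s => P.p s (Function.update h ⟨T-1, idx_lt T 0⟩ (h' ⟨T-1, idx_lt T 0⟩)) m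
            (Function.update h ⟨T-1, idx_lt T 0⟩ (h' ⟨T-1, idx_lt T 0⟩) s)),
        filter_ge_top (T-1+1) (by omega)]
      simp only [Finset.prod_empty]
      rw [hPc, Function.update_self]
      ring
    have hgt : ∀ (h' : Fin T → H) (m' : Fin T → M),
        gtail Q r γ (T-1) (spl (T-1) h h') (spl (T-1+1) m m')
          = γ * r (Function.update h ⟨T-1, idx_lt T 0⟩ (h' ⟨T-1, idx_lt T 0⟩)) m := by
      intro h' m'
      rw [gtail, hA h', hB m', filter_ge_top (T-1+1) (by omega), Finset.sum_empty, add_zero]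
    constructor
    · calc ∑ h' : Fin T → H, ∑ m' : Fin T → M,
            core P Q (T-1) (spl (T-1) h h') (spl (T-1+1) m m')
          = ∑ h' : Fin T → H, (Fintype.card M : ℝ)^T *
              P.p ⟨T-1, idx_lt T 0⟩ h m (h' ⟨T-1, idx_lt T 0⟩) := by
            refine Finset.sum_congr rfl (fun h' _ => ?_)
            rw [Finset.sum_congr rfl (fun m' _ => hcore h' m'), sum_const_fun]
        _ = (Fintype.card M : ℝ)^T *
              ∑ h' : Fin T → H, P.p ⟨T-1, idx_lt T 0⟩ h m (h' ⟨T-1, idx_lt T 0⟩) := by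
            rw [Finset.mul_sum]
        _ = (Fintype.card M : ℝ)^T * ((Fintype.card H : ℝ)^(T-1) *
              ∑ a : H, P.p ⟨T-1, idx_lt T 0⟩ h m a) := by
            rw [sum_eval_coord]
        _ = (Fintype.card H : ℝ)^(T-1) * (Fintype.card M : ℝ)^(T-1+1) := by
            rw [P.sum_one, hT1]
            ring
    · calc ∑ h' : Fin T → H, ∑ m' : Fin T → M,
            core P Q (T-1) (spl (T-1) h h') (spl (T-1+1) m m') *
              gtail Q r γ (T-1) (spl (T-1) h h') (spl (T-1+1) m m')
          = ∑ h' : Fin T → H, (Fintype.card M : ℝ)^T *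
              (P.p ⟨T-1, idx_lt T 0⟩ h m (h' ⟨T-1, idx_lt T 0⟩) *
                (γ * r (Function.update h ⟨T-1, idx_lt T 0⟩ (h' ⟨T-1, idx_lt T 0⟩)) m)) := by
            refine Finset.sum_congr rfl (fun h' _ => ?_)
            rw [Finset.sum_congr rfl (fun m' _ => by rw [hcore h' m', hgt h' m']), sum_const_fun]
        _ = (Fintype.card M : ℝ)^T *
              ∑ h' : Fin T → H, (P.p ⟨T-1, idx_lt T 0⟩ h m (h' ⟨T-1, idx_lt T 0⟩) *
                (γ * r (Function.update h ⟨T-1, idx_lt T 0⟩ (h' ⟨T-1, idx_lt T 0⟩)) m)) := by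
            rw [Finset.mul_sum]
        _ = (Fintype.card M : ℝ)^T * ((Fintype.card H : ℝ)^(T-1) *
              ∑ a : H, P.p ⟨T-1, idx_lt T 0⟩ h m a *
                (γ * r (Function.update h ⟨T-1, idx_lt T 0⟩ a) m)) := by
            congr 1
            exact sum_eval_coord (⟨T-1, idx_lt T 0⟩ : Fin T)
              (fun a => P.p ⟨T-1, idx_lt T 0⟩ h m a *
                (γ * r (Function.update h ⟨T-1, idx_lt T 0⟩ a) m))
        _ = (Fintype.card H : ℝ)^(T-1) * (Fintype.card M : ℝ)^(T-1+1) * Waux P Q r γ 0 h m := by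
            rw [hT1, show Waux P Q r γ 0 h m = ∑ a : H, P.p ⟨T - 1, idx_lt T 0⟩ h m a *
              (γ * r (Function.update h ⟨T - 1, idx_lt T 0⟩ a) m) from rfl]
            ring
  | succ k ih =>
    intro hk h m
    have hk' : k < T := by omega
    have het : T - 1 - (k+1) + 1 = T - 1 - k := by omega
    have hHM : ((Fintype.card H : ℝ) * (Fintype.card M : ℝ)) ≠ 0 := by
      have h1 : (Fintype.card H : ℝ) ≠ 0 := Nat.cast_ne_zero.mpr Fintype.card_ne_zero
      have h2 : (Fintype.card M : ℝ) ≠ 0 := Nat.cast_ne_zero.mpr Fintype.card_ne_zero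
      exact mul_ne_zero h1 h2
    have hpowH : (Fintype.card H : ℝ)^(T-1-k)
        = (Fintype.card H : ℝ) * (Fintype.card H : ℝ)^(T-1-(k+1)) := by
      rw [← het, pow_succ]
      ring
    have hpowM : (Fintype.card M : ℝ)^(T-1-k+1)
        = (Fintype.card M : ℝ) * (Fintype.card M : ℝ)^(T-1-(k+1)+1) := by
      rw [← het, pow_succ]
      ring
    constructor
    · apply mul_left_cancel₀ hHM
      rw [mass_step P Q (T-1-(k+1)) (T-1-k) het (idx_lt T (k+1)) (idx_lt T k) h m]
      have hin : ∀ (a : H) (b : M),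
          ∑ h' : Fin T → H, ∑ m' : Fin T → M,
            core P Q (T-1-k)
              (spl (T-1-k) (Function.update h ⟨T-1-(k+1), idx_lt T (k+1)⟩ a) h')
              (spl (T-1-k+1) (Function.update m ⟨T-1-k, idx_lt T k⟩ b) m')
          = (Fintype.card H : ℝ)^(T-1-k) * (Fintype.card M : ℝ)^(T-1-k+1) :=
        fun a b => (ih hk' (Function.update h ⟨T-1-(k+1), idx_lt T (k+1)⟩ a)
          (Function.update m ⟨T-1-k, idx_lt T k⟩ b)).1
      calc ∑ a : H, P.p ⟨T-1-(k+1), idx_lt T (k+1)⟩ h m a *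
            ∑ b : M, Q.q ⟨T-1-k, idx_lt T k⟩
                (Function.update h ⟨T-1-(k+1), idx_lt T (k+1)⟩ a) m b *
              (∑ h' : Fin T → H, ∑ m' : Fin T → M,
                core P Q (T-1-k)
                  (spl (T-1-k) (Function.update h ⟨T-1-(k+1), idx_lt T (k+1)⟩ a) h')
                  (spl (T-1-k+1) (Function.update m ⟨T-1-k, idx_lt T k⟩ b) m'))
          = ∑ a : H, P.p ⟨T-1-(k+1), idx_lt T (k+1)⟩ h m a *
              ∑ b : M, Q.q ⟨T-1-k, idx_lt T k⟩
                  (Function.update h ⟨T-1-(k+1), idx_lt T (k+1)⟩ a) m b *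
                ((Fintype.card H : ℝ)^(T-1-k) * (Fintype.card M : ℝ)^(T-1-k+1)) := by
            exact Finset.sum_congr rfl (fun a _ => by
              rw [Finset.sum_congr rfl (fun b _ => by rw [hin a b])])
        _ = ∑ a : H, P.p ⟨T-1-(k+1), idx_lt T (k+1)⟩ h m a *
              (((Fintype.card H : ℝ)^(T-1-k) * (Fintype.card M : ℝ)^(T-1-k+1)) *
                ∑ b : M, Q.q ⟨T-1-k, idx_lt T k⟩
                  (Function.update h ⟨T-1-(k+1), idx_lt T (k+1)⟩ a) m b) := by
            exact Finset.sum_congr rfl (fun a _ => by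
              rw [← Finset.sum_mul, mul_comm (∑ b : M, Q.q ⟨T-1-k, idx_lt T k⟩
                (Function.update h ⟨T-1-(k+1), idx_lt T (k+1)⟩ a) m b)])
        _ = ∑ a : H, P.p ⟨T-1-(k+1), idx_lt T (k+1)⟩ h m a *
              ((Fintype.card H : ℝ)^(T-1-k) * (Fintype.card M : ℝ)^(T-1-k+1)) := by
            exact Finset.sum_congr rfl (fun a _ => by rw [Q.sum_one, mul_one])
        _ = ((Fintype.card H : ℝ) * (Fintype.card M : ℝ)) *
              ((Fintype.card H : ℝ)^(T-1-(k+1)) * (Fintype.card M : ℝ)^(T-1-(k+1)+1)) := by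
            rw [← Finset.sum_mul, P.sum_one, one_mul, hpowH, hpowM]
            ring
    · apply mul_left_cancel₀ hHM
      rw [weighted_step P Q r γ (T-1-(k+1)) (T-1-k) het (idx_lt T (k+1)) (idx_lt T k) h m]
      have hin : ∀ (a : H) (b : M),
          (- Real.log (Q.q ⟨T-1-k, idx_lt T k⟩
              (Function.update h ⟨T-1-(k+1), idx_lt T (k+1)⟩ a) m b)) *
            (∑ h' : Fin T → H, ∑ m' : Fin T → M,
              core P Q (T-1-k)
                (spl (T-1-k) (Function.update h ⟨T-1-(k+1), idx_lt T (k+1)⟩ a) h')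
                (spl (T-1-k+1) (Function.update m ⟨T-1-k, idx_lt T k⟩ b) m'))
          + ∑ h' : Fin T → H, ∑ m' : Fin T → M,
              core P Q (T-1-k)
                (spl (T-1-k) (Function.update h ⟨T-1-(k+1), idx_lt T (k+1)⟩ a) h')
                (spl (T-1-k+1) (Function.update m ⟨T-1-k, idx_lt T k⟩ b) m') *
              gtail Q r γ (T-1-k)
                (spl (T-1-k) (Function.update h ⟨T-1-(k+1), idx_lt T (k+1)⟩ a) h')
                (spl (T-1-k+1) (Function.update m ⟨T-1-k, idx_lt T k⟩ b) m')
          = ((Fintype.card H : ℝ)^(T-1-k) * (Fintype.card M : ℝ)^(T-1-k+1)) *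
              ((- Real.log (Q.q ⟨T-1-k, idx_lt T k⟩
                  (Function.update h ⟨T-1-(k+1), idx_lt T (k+1)⟩ a) m b)) +
                Waux P Q r γ k (Function.update h ⟨T-1-(k+1), idx_lt T (k+1)⟩ a)
                  (Function.update m ⟨T-1-k, idx_lt T k⟩ b)) := by
        intro a b
        rw [(ih hk' (Function.update h ⟨T-1-(k+1), idx_lt T (k+1)⟩ a)
            (Function.update m ⟨T-1-k, idx_lt T k⟩ b)).1,
          (ih hk' (Function.update h ⟨T-1-(k+1), idx_lt T (k+1)⟩ a)
            (Function.update m ⟨T-1-k, idx_lt T k⟩ b)).2]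
        ring
      calc ∑ a : H, P.p ⟨T-1-(k+1), idx_lt T (k+1)⟩ h m a *
            ∑ b : M, Q.q ⟨T-1-k, idx_lt T k⟩
                (Function.update h ⟨T-1-(k+1), idx_lt T (k+1)⟩ a) m b *
              ((- Real.log (Q.q ⟨T-1-k, idx_lt T k⟩
                  (Function.update h ⟨T-1-(k+1), idx_lt T (k+1)⟩ a) m b)) *
                  (∑ h' : Fin T → H, ∑ m' : Fin T → M,
                    core P Q (T-1-k)
                      (spl (T-1-k) (Function.update h ⟨T-1-(k+1), idx_lt T (k+1)⟩ a) h')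
                      (spl (T-1-k+1) (Function.update m ⟨T-1-k, idx_lt T k⟩ b) m'))
                + ∑ h' : Fin T → H, ∑ m' : Fin T → M,
                    core P Q (T-1-k)
                      (spl (T-1-k) (Function.update h ⟨T-1-(k+1), idx_lt T (k+1)⟩ a) h')
                      (spl (T-1-k+1) (Function.update m ⟨T-1-k, idx_lt T k⟩ b) m') *
                    gtail Q r γ (T-1-k)
                      (spl (T-1-k) (Function.update h ⟨T-1-(k+1), idx_lt T (k+1)⟩ a) h')
                      (spl (T-1-k+1) (Function.update m ⟨T-1-k, idx_lt T k⟩ b) m'))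
          = ∑ a : H, P.p ⟨T-1-(k+1), idx_lt T (k+1)⟩ h m a *
              ∑ b : M, Q.q ⟨T-1-k, idx_lt T k⟩
                  (Function.update h ⟨T-1-(k+1), idx_lt T (k+1)⟩ a) m b *
                (((Fintype.card H : ℝ)^(T-1-k) * (Fintype.card M : ℝ)^(T-1-k+1)) *
                  ((- Real.log (Q.q ⟨T-1-k, idx_lt T k⟩
                      (Function.update h ⟨T-1-(k+1), idx_lt T (k+1)⟩ a) m b)) +
                    Waux P Q r γ k (Function.update h ⟨T-1-(k+1), idx_lt T (k+1)⟩ a)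
                      (Function.update m ⟨T-1-k, idx_lt T k⟩ b))) := by
            exact Finset.sum_congr rfl (fun a _ => by
              rw [Finset.sum_congr rfl (fun b _ => by rw [hin a b])])
        _ = ((Fintype.card H : ℝ)^(T-1-k) * (Fintype.card M : ℝ)^(T-1-k+1)) *
              ∑ a : H, P.p ⟨T-1-(k+1), idx_lt T (k+1)⟩ h m a *
                ∑ b : M, Q.q ⟨T-1-k, idx_lt T k⟩
                    (Function.update h ⟨T-1-(k+1), idx_lt T (k+1)⟩ a) m b *
                  ((- Real.log (Q.q ⟨T-1-k, idx_lt T k⟩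
                      (Function.update h ⟨T-1-(k+1), idx_lt T (k+1)⟩ a) m b)) +
                    Waux P Q r γ k (Function.update h ⟨T-1-(k+1), idx_lt T (k+1)⟩ a)
                      (Function.update m ⟨T-1-k, idx_lt T k⟩ b)) := by
            have hpull : ∀ (c pa : ℝ) (f g : M → ℝ),
                pa * ∑ b, f b * (c * g b) = c * (pa * ∑ b, f b * g b) := by
              intro c pa f g
              have h1 : ∑ b, f b * (c * g b) = c * ∑ b, f b * g b := by
                rw [Finset.mul_sum]
                exact Finset.sum_congr rfl (fun b _ => by ring)
              rw [h1]
              ring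
            rw [Finset.mul_sum]
            exact Finset.sum_congr rfl (fun a _ => hpull _ _ _ _)
        _ = ((Fintype.card H : ℝ) * (Fintype.card M : ℝ)) *
              ((Fintype.card H : ℝ)^(T-1-(k+1)) * (Fintype.card M : ℝ)^(T-1-(k+1)+1) *
                Waux P Q r γ (k+1) h m) := by
            rw [show Waux P Q r γ (k+1) h m = ∑ a : H,
              P.p ⟨T - 1 - (k + 1), idx_lt T (k + 1)⟩ h m a *
                ∑ b : M, Q.q ⟨T - 1 - k, idx_lt T k⟩
                    (Function.update h ⟨T - 1 - (k + 1), idx_lt T (k + 1)⟩ a) m b *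
                  (- Real.log (Q.q ⟨T - 1 - k, idx_lt T k⟩
                      (Function.update h ⟨T - 1 - (k + 1), idx_lt T (k + 1)⟩ a) m b) +
                    Waux P Q r γ k (Function.update h ⟨T - 1 - (k + 1), idx_lt T (k + 1)⟩ a)
                      (Function.update m ⟨T - 1 - k, idx_lt T k⟩ b)) from rfl]
            rw [hpowH, hpowM]
            ring


/-! ### Rewriting the objective via the tail recursion -/

lemma F_eq [Nonempty H] [Nonempty M] (P : HumanModel T H M) (Q : MachinePolicy T H M)
    (r : (Fin T → H) → (Fin T → M) → ℝ) (γ : ℝ) (h0T : 0 < T)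
    (h₀ : Fin T → H) (m₀ : Fin T → M) :
    machineEntropy P Q + γ * expVal P Q r
      = ∑ b : M, Q.q ⟨0, h0T⟩ h₀ m₀ b *
          (- Real.log (Q.q ⟨0, h0T⟩ h₀ m₀ b) +
            Waux P Q r γ (T-1) h₀ (Function.update m₀ ⟨0, h0T⟩ b)) := by
  have hMne : (Fintype.card M : ℝ) ≠ 0 := Nat.cast_ne_zero.mpr Fintype.card_ne_zero
  -- pointwise rewriting of the integrand
  have hQcc : ∀ (h : Fin T → H) (m : Fin T → M),
      Q.cc h m = Q.q ⟨0, h0T⟩ h m (m ⟨0, h0T⟩) *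
        ∏ s ∈ Finset.univ.filter (fun s : Fin T => 0 + 1 ≤ (s:ℕ)), Q.q s h m (m s) := by
    intro h m
    rw [MachinePolicy.cc]
    calc ∏ s : Fin T, Q.q s h m (m s)
        = ∏ s ∈ Finset.univ.filter (fun s : Fin T => 0 ≤ (s:ℕ)), Q.q s h m (m s) :=
          Finset.prod_congr filter_ge_zero.symm (fun _ _ => rfl)
      _ = _ := prod_ge_split 0 h0T _
  have hcore0 : ∀ (h : Fin T → H) (m : Fin T → M),
      core P Q 0 h m = P.cc h m *
        ∏ s ∈ Finset.univ.filter (fun s : Fin T => 0 + 1 ≤ (s:ℕ)), Q.q s h m (m s) := by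
    intro h m
    rw [core, HumanModel.cc]
    congr 1
    exact Finset.prod_congr filter_ge_zero (fun _ _ => rfl)
  have hpt : ∀ (h : Fin T → H) (m : Fin T → M),
      jointPMF P Q h m * (- Real.log (Q.cc h m)) + γ * (jointPMF P Q h m * r h m)
        = Q.q ⟨0, h0T⟩ h m (m ⟨0, h0T⟩) *
          (core P Q 0 h m *
            (- Real.log (Q.q ⟨0, h0T⟩ h m (m ⟨0, h0T⟩)) + gtail Q r γ 0 h m)) := by
    intro h m
    by_cases hz : Q.cc h m = 0
    · have h2 : Q.q ⟨0, h0T⟩ h m (m ⟨0, h0T⟩) *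
          ∏ s ∈ Finset.univ.filter (fun s : Fin T => 0 + 1 ≤ (s:ℕ)), Q.q s h m (m s) = 0 := by
        rw [← hQcc h m]
        exact hz
      rw [jointPMF, hz, hcore0]
      linear_combination (-(P.cc h m *
        (- Real.log (Q.q ⟨0, h0T⟩ h m (m ⟨0, h0T⟩)) + gtail Q r γ 0 h m))) * h2
    · have hfac : ∀ s : Fin T, Q.q s h m (m s) ≠ 0 := by
        intro s hs0
        exact hz (by rw [MachinePolicy.cc]; exact Finset.prod_eq_zero (Finset.mem_univ s) hs0)
      have hlog : Real.log (Q.cc h m)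
          = Real.log (Q.q ⟨0, h0T⟩ h m (m ⟨0, h0T⟩)) +
            ∑ s ∈ Finset.univ.filter (fun s : Fin T => 0 + 1 ≤ (s:ℕ)),
              Real.log (Q.q s h m (m s)) := by
        rw [MachinePolicy.cc, Real.log_prod (fun s _ => hfac s)]
        calc ∑ s : Fin T, Real.log (Q.q s h m (m s))
            = ∑ s ∈ Finset.univ.filter (fun s : Fin T => 0 ≤ (s:ℕ)),
                Real.log (Q.q s h m (m s)) :=
              Finset.sum_congr filter_ge_zero.symm (fun _ _ => rfl)
          _ = _ := sum_ge_split 0 h0T _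
      have hsumneg : ∑ s ∈ Finset.univ.filter (fun s : Fin T => 0 + 1 ≤ (s:ℕ)),
          (- Real.log (Q.q s h m (m s)))
          = - ∑ s ∈ Finset.univ.filter (fun s : Fin T => 0 + 1 ≤ (s:ℕ)),
              Real.log (Q.q s h m (m s)) := by
        rw [Finset.sum_neg_distrib]
      rw [jointPMF, gtail, hsumneg, hcore0, hlog, hQcc h m]
      ring
  -- the global sum
  have hstep1 : machineEntropy P Q + γ * expVal P Q r
      = ∑ h : Fin T → H, ∑ m : Fin T → M,
          Q.q ⟨0, h0T⟩ h₀ m₀ (m ⟨0, h0T⟩) *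
            (core P Q 0 h m *
              (- Real.log (Q.q ⟨0, h0T⟩ h₀ m₀ (m ⟨0, h0T⟩)) + gtail Q r γ 0 h m)) := by
    have hQ0 : ∀ (h : Fin T → H) (m : Fin T → M) (b : M),
        Q.q ⟨0, h0T⟩ h m b = Q.q ⟨0, h0T⟩ h₀ m₀ b := by
      intro h m b
      exact congrFun (Q.causal ⟨0, h0T⟩ h h₀ m m₀
        (fun s hs => absurd hs (Nat.not_lt_zero _))
        (fun s hs => absurd hs (Nat.not_lt_zero _))) b
    rw [machineEntropy, expVal, Finset.mul_sum]
    rw [← Finset.sum_add_distrib]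
    refine Finset.sum_congr rfl (fun h _ => ?_)
    rw [Finset.mul_sum, ← Finset.sum_add_distrib]
    refine Finset.sum_congr rfl (fun m _ => ?_)
    rw [hpt h m, hQ0 h m]
  rw [hstep1]
  -- peel the coordinate 0 of m
  have hsplit : ∀ h : Fin T → H,
      (Fintype.card M : ℝ) * ∑ m : Fin T → M,
          Q.q ⟨0, h0T⟩ h₀ m₀ (m ⟨0, h0T⟩) *
            (core P Q 0 h m *
              (- Real.log (Q.q ⟨0, h0T⟩ h₀ m₀ (m ⟨0, h0T⟩)) + gtail Q r γ 0 h m))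
        = ∑ b : M, ∑ m : Fin T → M,
            Q.q ⟨0, h0T⟩ h₀ m₀ b *
              (core P Q 0 h (Function.update m ⟨0, h0T⟩ b) *
                (- Real.log (Q.q ⟨0, h0T⟩ h₀ m₀ b) +
                  gtail Q r γ 0 h (Function.update m ⟨0, h0T⟩ b))) := by
    intro h
    have := card_mul_sum_split (T := T) (⟨0, h0T⟩ : Fin T)
      (fun b m => Q.q ⟨0, h0T⟩ h₀ m₀ b *
        (core P Q 0 h (Function.update m ⟨0, h0T⟩ b) *
          (- Real.log (Q.q ⟨0, h0T⟩ h₀ m₀ b) +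
            gtail Q r γ 0 h (Function.update m ⟨0, h0T⟩ b))))
      (fun b c m => by
        beta_reduce
        rw [Function.update_idem])
    rw [← this]
    congr 1
    refine Finset.sum_congr rfl (fun m _ => ?_)
    beta_reduce
    rw [Function.update_eq_self]
  -- the tail sums at level T-1
  have e0 : T - 1 - (T - 1) = 0 := by omega
  have hspl1 : ∀ (b : M) (m' : Fin T → M),
      spl (0+1) (Function.update m₀ ⟨0, h0T⟩ b) m' = Function.update m' ⟨0, h0T⟩ b := by
    intro b m'
    funext s
    by_cases hs : (s:ℕ) < 0 + 1
    · have hs0 : s = ⟨0, h0T⟩ := Fin.ext (show (s:ℕ) = 0 by omega)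
      subst hs0
      rw [spl_apply_lt _ _ _ _ hs, Function.update_self, Function.update_self]
    · have hne : s ≠ ⟨0, h0T⟩ := by
        intro e
        rw [e] at hs
        exact hs (Nat.lt_succ_self 0)
      rw [spl_apply_ge _ _ _ s (by omega), Function.update_of_ne hne]
  have htails : ∀ b : M,
      (∑ h : Fin T → H, ∑ m : Fin T → M, core P Q 0 h (Function.update m ⟨0, h0T⟩ b)
        = (Fintype.card M : ℝ))
      ∧ (∑ h : Fin T → H, ∑ m : Fin T → M,
          core P Q 0 h (Function.update m ⟨0, h0T⟩ b) *
            gtail Q r γ 0 h (Function.update m ⟨0, h0T⟩ b)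
        = (Fintype.card M : ℝ) * Waux P Q r γ (T-1) h₀ (Function.update m₀ ⟨0, h0T⟩ b)) := by
    intro b
    have hmain := tail_main P Q r γ (T-1) (by omega) h₀ (Function.update m₀ ⟨0, h0T⟩ b)
    rw [e0] at hmain
    simp only [spl_zero, hspl1, pow_zero, zero_add, pow_one, one_mul] at hmain
    exact hmain
  calc ∑ h : Fin T → H, ∑ m : Fin T → M,
        Q.q ⟨0, h0T⟩ h₀ m₀ (m ⟨0, h0T⟩) *
          (core P Q 0 h m *
            (- Real.log (Q.q ⟨0, h0T⟩ h₀ m₀ (m ⟨0, h0T⟩)) + gtail Q r γ 0 h m))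
      = (Fintype.card M : ℝ)⁻¹ * ∑ h : Fin T → H, ∑ b : M, ∑ m : Fin T → M,
          Q.q ⟨0, h0T⟩ h₀ m₀ b *
            (core P Q 0 h (Function.update m ⟨0, h0T⟩ b) *
              (- Real.log (Q.q ⟨0, h0T⟩ h₀ m₀ b) +
                gtail Q r γ 0 h (Function.update m ⟨0, h0T⟩ b))) := by
        rw [Finset.mul_sum]
        refine Finset.sum_congr rfl (fun h _ => ?_)
        rw [← hsplit h, ← mul_assoc, inv_mul_cancel₀ hMne, one_mul]
    _ = (Fintype.card M : ℝ)⁻¹ * ∑ b : M, ∑ h : Fin T → H, ∑ m : Fin T → M,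
          Q.q ⟨0, h0T⟩ h₀ m₀ b *
            (core P Q 0 h (Function.update m ⟨0, h0T⟩ b) *
              (- Real.log (Q.q ⟨0, h0T⟩ h₀ m₀ b) +
                gtail Q r γ 0 h (Function.update m ⟨0, h0T⟩ b))) := by
        rw [Finset.sum_comm]
    _ = (Fintype.card M : ℝ)⁻¹ * ∑ b : M,
          Q.q ⟨0, h0T⟩ h₀ m₀ b *
            ((- Real.log (Q.q ⟨0, h0T⟩ h₀ m₀ b)) *
                (∑ h : Fin T → H, ∑ m : Fin T → M,
                  core P Q 0 h (Function.update m ⟨0, h0T⟩ b))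
              + ∑ h : Fin T → H, ∑ m : Fin T → M,
                  core P Q 0 h (Function.update m ⟨0, h0T⟩ b) *
                    gtail Q r γ 0 h (Function.update m ⟨0, h0T⟩ b)) := by
        congr 1
        refine Finset.sum_congr rfl (fun b _ => ?_)
        rw [sum_sum_mul_left, sum_sum_mul_add]
    _ = ∑ b : M, Q.q ⟨0, h0T⟩ h₀ m₀ b *
          (- Real.log (Q.q ⟨0, h0T⟩ h₀ m₀ b) +
            Waux P Q r γ (T-1) h₀ (Function.update m₀ ⟨0, h0T⟩ b)) := by
        rw [Finset.mul_sum]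
        refine Finset.sum_congr rfl (fun b _ => ?_)
        rw [(htails b).1, (htails b).2]
        field_simp

end OptProofAux


/-- solution of the machine policy optimization problem, Theorem 4:
the machine policy `Q̂` obtained from the `Y_γ` backward recursion maximizes the
entropy-regularized expected reward
`H_{P̂Q}(M^T‖H^T) + γ·E_{P̂Q}[r(H^T,M^T)]` over all machine policies `Q`. -/
theorem optMachine_maximizes [Nonempty H] [Nonempty M]
    (Phat : HumanModel T H M) (r : (Fin T → H) → (Fin T → M) → ℝ)
    (γ : ℝ) (hγ : 0 < γ)
    (Qhat : MachinePolicy T H M) (hQhat : IsOptMachine Phat r γ Qhat) :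
    ∀ Q : MachinePolicy T H M,
      machineEntropy Phat Q + γ * expVal Phat Q r ≤
        machineEntropy Phat Qhat + γ * expVal Phat Qhat r := by
  intro Q
  have h0T : 0 < T := Nat.pos_of_ne_zero (NeZero.ne T)
  let h₀ : Fin T → H := fun _ => Classical.arbitrary H
  let m₀ : Fin T → M := fun _ => Classical.arbitrary M
  rw [F_eq Phat Q r γ h0T h₀ m₀, F_eq Phat Qhat r γ h0T h₀ m₀]
  set y : M → ℝ := fun b => Yaux Phat r γ (T-1) h₀ (Function.update m₀ ⟨0, h0T⟩ b) with hy
  have hypos : ∀ b, 0 < y b := fun b => Yaux_pos Phat r γ (T-1) _ _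
  have harg : ∀ b : M, Ycond Phat r γ ⟨0, h0T⟩ h₀ (Function.update m₀ ⟨0, h0T⟩ b) = y b :=
    fun b => rfl
  have hQhat0 : ∀ b : M, Qhat.q ⟨0, h0T⟩ h₀ m₀ b = y b / ∑ c, y c := by
    intro b
    rw [hQhat ⟨0, h0T⟩ h₀ m₀ b, harg b]
    congr 1
  have hWopt : ∀ b : M, Waux Phat Qhat r γ (T-1) h₀ (Function.update m₀ ⟨0, h0T⟩ b)
      = Real.log (y b) :=
    fun b => waux_opt Phat r γ Qhat hQhat (T-1) le_rfl h₀ _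
  calc ∑ b : M, Q.q ⟨0, h0T⟩ h₀ m₀ b *
        (- Real.log (Q.q ⟨0, h0T⟩ h₀ m₀ b) +
          Waux Phat Q r γ (T-1) h₀ (Function.update m₀ ⟨0, h0T⟩ b))
      ≤ ∑ b : M, Q.q ⟨0, h0T⟩ h₀ m₀ b *
        (- Real.log (Q.q ⟨0, h0T⟩ h₀ m₀ b) + Real.log (y b)) := by
        refine Finset.sum_le_sum (fun b _ => ?_)
        exact mul_le_mul_of_nonneg_left
          (add_le_add (le_refl _) (waux_le_log Phat Q r γ (T-1) h₀ _))
          (Q.nonneg _ _ _ _)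
    _ ≤ Real.log (∑ c, y c) :=
        gibbs_le _ y (fun b => Q.nonneg _ _ _ _) (Q.sum_one _ _ _) hypos
    _ = ∑ b : M, Qhat.q ⟨0, h0T⟩ h₀ m₀ b *
        (- Real.log (Qhat.q ⟨0, h0T⟩ h₀ m₀ b) +
          Waux Phat Qhat r γ (T-1) h₀ (Function.update m₀ ⟨0, h0T⟩ b)) := by
        rw [← gibbs_eq y hypos]
        exact (Finset.sum_congr rfl (fun b _ => by rw [hQhat0 b, hWopt b])).symm
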